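/- Let F be a field, q ∈ F nonzero with (q-q^{-1})(q^2-q^{-2}) ≠ 0, and let A₀, X be elements of an associative F-algebra such that A₀^3 X - [3]_q A₀^2 X A₀ + [3]_q A₀ X A₀^2 - X A₀^3 = (q^2-q^{-2})^2 (X A₀ - A₀ X) where [3]_q = q^2+q^{-2}+1. Set Y = X + (q A₀^2 X - (q+q^{-1}) A₀ X A₀ + q^{-1} X A₀^2)/((q-q^{-1})(q^2-q^{-2})). Then Y also satisfies the same relation: A₀^3 Y - [3]_q A₀^2 Y A₀ + [3]_q A₀ Y A₀^2 - Y A₀^3 = (q^2-q^{-2})^2 (Y A₀ - A₀ Y). -/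
import Mathlib


theorem stmt_17 {F : Type*} [Field F] (q : F) (hq : q ≠ 0)
    (hq1 : q - q⁻¹ ≠ 0) (hq2 : q^2 - q⁻¹^2 ≠ 0)
    {A : Type*} [Ring A] [Algebra F A] (A₀ X : A)
    (hDG : A₀^3 * X - (q^2 + q⁻¹^2 + 1) • (A₀^2 * X * A₀)
        + (q^2 + q⁻¹^2 + 1) • (A₀ * X * A₀^2) - X * A₀^3
        = (q^2 - q⁻¹^2)^2 • (X * A₀ - A₀ * X)) :
    let Y : A := X + ((q - q⁻¹) * (q^2 - q⁻¹^2))⁻¹ •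
      (q • (A₀^2 * X) - (q + q⁻¹) • (A₀ * X * A₀) + q⁻¹ • (X * A₀^2))
    A₀^3 * Y - (q^2 + q⁻¹^2 + 1) • (A₀^2 * Y * A₀)
        + (q^2 + q⁻¹^2 + 1) • (A₀ * Y * A₀^2) - Y * A₀^3
        = (q^2 - q⁻¹^2)^2 • (Y * A₀ - A₀ * Y) := by
  intro Y
  set c : F := ((q - q⁻¹) * (q^2 - q⁻¹^2))⁻¹ with hc
  set D : A := A₀^3 * X - (q^2 + q⁻¹^2 + 1) • (A₀^2 * X * A₀)
      + (q^2 + q⁻¹^2 + 1) • (A₀ * X * A₀^2) - X * A₀^3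
      - (q^2 - q⁻¹^2)^2 • (X * A₀ - A₀ * X) with hDdef
  have hD : D = 0 := sub_eq_zero.mpr hDG
  rw [← sub_eq_zero]
  have key : A₀^3 * Y - (q^2 + q⁻¹^2 + 1) • (A₀^2 * Y * A₀)
        + (q^2 + q⁻¹^2 + 1) • (A₀ * Y * A₀^2) - Y * A₀^3
        - (q^2 - q⁻¹^2)^2 • (Y * A₀ - A₀ * Y)
      = D + c • (q • (A₀^2 * D) - (q + q⁻¹) • (A₀ * D * A₀)
          + q⁻¹ • (D * A₀^2)) := by
    simp only [hDdef, Y, smul_sub, smul_add, mul_add, add_mul, mul_sub, sub_mul,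
      smul_mul_assoc, mul_smul_comm, smul_smul, pow_succ, pow_zero, one_mul,
      mul_assoc]
    module
  rw [key, hD]
  simp
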